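/- The boundary value problem u'''(t) = -(5u(t)³ + 4u(t) + 3)/(u(t)² + 1) on (0,1) with u(0)=u'(0)=u'(1)=0 has a unique monotone (nondecreasing) nonnegative solution u satisfying 0 ≤ u(t) ≤ 0.3417, 0 ≤ u'(t) ≤ 0.5125, |u''(t)| ≤ 2.05 on [0,1]. -/

import Mathlib

/-- `u` solves `u''' = -(5u³+4u+3)/(u²+1)` on `(0,1)` with `u(0)=u'(0)=u'(1)=0`. -/
def IsSolution (u : ℝ → ℝ) : Prop :=
  ContDiff ℝ 2 u ∧
  (∀ t ∈ Set.Ioo (0:ℝ) 1,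
    HasDerivAt (deriv (deriv u)) (-((5 * (u t) ^ 3 + 4 * u t + 3) / ((u t) ^ 2 + 1))) t) ∧
  u 0 = 0 ∧ deriv u 0 = 0 ∧ deriv u 1 = 0

/-- bounds of the example. -/
def InBounds (u : ℝ → ℝ) : Prop :=
  ∀ t ∈ Set.Icc (0:ℝ) 1,
    u t ∈ Set.Icc 0 ((0.3417 : ℝ)) ∧ deriv u t ∈ Set.Icc 0 ((0.5125 : ℝ)) ∧ |deriv (deriv u) t| ≤ (2.05 : ℝ)

section Aux

open Set intervalIntegral MeasureTheory

set_option linter.unusedSectionVars false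

noncomputable def gfun (x : ℝ) : ℝ := (5 * x ^ 3 + 4 * x + 3) / (x ^ 2 + 1)

noncomputable def clip (x : ℝ) : ℝ := max 0 (min x 0.3417)

lemma clip_mem (x : ℝ) : clip x ∈ Icc (0:ℝ) 0.3417 := by
  constructor
  · exact le_max_left _ _
  · simp only [clip, max_le_iff]
    constructor
    · norm_num
    · exact min_le_right _ _

lemma clip_eq_self {x : ℝ} (hx : x ∈ Icc (0:ℝ) 0.3417) : clip x = x := by
  simp only [clip, min_eq_left hx.2, max_eq_right hx.1]

lemma clip_lip (x y : ℝ) : |clip x - clip y| ≤ |x - y| := by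
  have h1 : |max (min x 0.3417) 0 - max (min y 0.3417) 0| ≤ |min x 0.3417 - min y 0.3417| :=
    abs_max_sub_max_le_abs _ _ _
  have h2 : |min x 0.3417 - min y 0.3417| ≤ max |x - y| |(0.3417:ℝ) - 0.3417| :=
    abs_min_sub_min_le_max _ _ _ _
  rw [sub_self, abs_zero, max_eq_left (abs_nonneg _)] at h2
  calc |clip x - clip y| = |max (min x 0.3417) 0 - max (min y 0.3417) 0| := by
        simp only [clip, max_comm]
    _ ≤ |min x 0.3417 - min y 0.3417| := h1
    _ ≤ |x - y| := h2

lemma clip_cont : Continuous clip := by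
  exact continuous_const.max (continuous_id.min continuous_const)

lemma denom_pos (x : ℝ) : (0:ℝ) < x ^ 2 + 1 := by positivity

lemma gfun_cont : Continuous gfun := by
  apply Continuous.div (by continuity) (by continuity)
  intro x; exact ne_of_gt (denom_pos x)

lemma gfun_lb {x : ℝ} (hx : x ∈ Icc (0:ℝ) 0.3417) : 3 ≤ gfun x := by
  rw [gfun, le_div_iff₀ (denom_pos x)]
  nlinarith [hx.1, hx.2, sq_nonneg x]

lemma gfun_ub {x : ℝ} (hx : x ∈ Icc (0:ℝ) 0.3417) : gfun x ≤ 4.1 := by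
  rw [gfun, div_le_iff₀ (denom_pos x)]
  nlinarith [hx.1, hx.2, sq_nonneg x, mul_nonneg hx.1 hx.1]

lemma gfun_mono {x y : ℝ} (hx : x ∈ Icc (0:ℝ) 0.3417) (hy : y ∈ Icc (0:ℝ) 0.3417)
    (hxy : y ≤ x) : gfun y ≤ gfun x := by
  rw [gfun, gfun, div_le_div_iff₀ (denom_pos y) (denom_pos x)]
  nlinarith [hx.1, hx.2, hy.1, hy.2, mul_nonneg hy.1 hx.1, sq_nonneg (x*y),
    mul_nonneg (mul_nonneg hy.1 hx.1) hx.1, mul_nonneg (mul_nonneg hy.1 hy.1) hx.1]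

lemma gfun_diff_le {x y : ℝ} (hx : x ∈ Icc (0:ℝ) 0.3417) (hy : y ∈ Icc (0:ℝ) 0.3417)
    (hxy : y ≤ x) : gfun x - gfun y ≤ 5 * (x - y) := by
  rw [gfun, gfun, div_sub_div _ _ (ne_of_gt (denom_pos x)) (ne_of_gt (denom_pos y)),
    div_le_iff₀ (by positivity)]
  nlinarith [mul_nonneg (by linarith : (0:ℝ) ≤ x - y)
    (by nlinarith [mul_le_mul hx.2 hy.2 hy.1 (by norm_num : (0:ℝ) ≤ 0.3417), hx.1, hy.1] :
      (0:ℝ) ≤ 1 - x*y + 3*x + 3*y)]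

lemma gfun_lip {x y : ℝ} (hx : x ∈ Icc (0:ℝ) 0.3417) (hy : y ∈ Icc (0:ℝ) 0.3417) :
    |gfun x - gfun y| ≤ 5 * |x - y| := by
  rcases le_total y x with h | h
  · rw [abs_of_nonneg (by linarith [gfun_mono hx hy h]), abs_of_nonneg (by linarith)]
    exact gfun_diff_le hx hy h
  · rw [abs_sub_comm, abs_sub_comm x y,
      abs_of_nonneg (by linarith [gfun_mono hy hx h]), abs_of_nonneg (by linarith)]
    exact gfun_diff_le hy hx h

section C
variable (h : ℝ → ℝ)

noncomputable def Aint : ℝ := ∫ s in (0:ℝ)..1, (1 - s) * h s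
noncomputable def I0 (t : ℝ) : ℝ := ∫ s in (0:ℝ)..t, h s
noncomputable def I1 (t : ℝ) : ℝ := ∫ s in (0:ℝ)..t, s * h s
noncomputable def I2 (t : ℝ) : ℝ := ∫ s in (0:ℝ)..t, s ^ 2 * h s
noncomputable def Ufun (t : ℝ) : ℝ :=
  Aint h * t ^ 2 / 2 - (t ^ 2 * I0 h t - 2 * t * I1 h t + I2 h t) / 2
noncomputable def U1 (t : ℝ) : ℝ := Aint h * t - (t * I0 h t - I1 h t)
noncomputable def U2 (t : ℝ) : ℝ := Aint h - I0 h t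

variable {h}
variable (hc : Continuous h)
include hc

lemma ii (p : ℝ → ℝ) (hp : Continuous p) (x y : ℝ) :
    IntervalIntegrable (fun s => p s * h s) volume x y :=
  (hp.mul hc).intervalIntegrable x y

/-- linear-combination helper -/
lemma integral_poly_comb (x y a b c : ℝ) :
    ∫ s in x..y, (a + b * s + c * s ^ 2) * h s
      = a * (∫ s in x..y, h s) + b * (∫ s in x..y, s * h s)
        + c * (∫ s in x..y, s ^ 2 * h s) := by
  rw [← intervalIntegral.integral_const_mul, ← intervalIntegral.integral_const_mul, ← intervalIntegral.integral_const_mul,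
    ← integral_add ((show Continuous fun s => a * h s from continuous_const.mul hc).intervalIntegrable x y)
      ((show Continuous fun s => b * (s * h s) from continuous_const.mul (continuous_id'.mul hc)).intervalIntegrable x y),
    ← integral_add ((show Continuous fun s => a * h s + b * (s * h s) from (continuous_const.mul hc).add
        (continuous_const.mul (continuous_id'.mul hc))).intervalIntegrable x y)
      ((show Continuous fun s => c * (s ^ 2 * h s) from continuous_const.mul ((continuous_pow 2).mul hc)).intervalIntegrable x y)]
  apply integral_congr
  intro s _
  ring

omit hc in
/-- polynomial integral evaluation -/
lemma integral_poly_eval (x y a b c C : ℝ) :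
    ∫ s in x..y, (a + b * s + c * s ^ 2) * C
      = (a * y + b * y ^ 2 / 2 + c * y ^ 3 / 3) * C
        - (a * x + b * x ^ 2 / 2 + c * x ^ 3 / 3) * C := by
  apply integral_eq_sub_of_hasDerivAt
  · intro s _
    have h1 : HasDerivAt (fun s : ℝ => (a * s + b * s ^ 2 / 2 + c * s ^ 3 / 3) * C)
        ((a * 1 + b * (2 * s ^ 1) / 2 + c * (3 * s ^ 2) / 3) * C) s := by
      exact ((((hasDerivAt_id s).const_mul a).add
        (((hasDerivAt_pow 2 s).const_mul b).div_const 2)).add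
        (((hasDerivAt_pow 3 s).const_mul c).div_const 3)).mul_const C
    refine h1.congr_deriv ?_
    ring
  · exact (Continuous.intervalIntegrable (by continuity) x y)

lemma Aint_eq : Aint h = I0 h 1 - I1 h 1 := by
  have := integral_poly_comb hc 0 1 1 (-1) 0
  simp only [I0, I1, I2, Aint] at *
  rw [show (∫ s in (0:ℝ)..1, (1 - s) * h s) = ∫ s in (0:ℝ)..1, (1 + (-1) * s + 0 * s ^ 2) * h s
    from integral_congr fun s _ => by ring]
  rw [this]; ring

lemma hasDerivAt_I0 (t : ℝ) : HasDerivAt (I0 h) (h t) t :=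
  integral_hasDerivAt_right (hc.intervalIntegrable 0 t)
    hc.aestronglyMeasurable.stronglyMeasurableAtFilter hc.continuousAt

lemma hasDerivAt_I1 (t : ℝ) : HasDerivAt (I1 h) (t * h t) t :=
  integral_hasDerivAt_right ((continuous_id'.mul hc).intervalIntegrable 0 t)
    (continuous_id'.mul hc).aestronglyMeasurable.stronglyMeasurableAtFilter
    (continuous_id'.mul hc).continuousAt

lemma hasDerivAt_I2 (t : ℝ) : HasDerivAt (I2 h) (t ^ 2 * h t) t :=
  integral_hasDerivAt_right (((continuous_pow 2).mul hc).intervalIntegrable 0 t)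
    ((continuous_pow 2).mul hc).aestronglyMeasurable.stronglyMeasurableAtFilter
    ((continuous_pow 2).mul hc).continuousAt

lemma hasDerivAt_U (t : ℝ) : HasDerivAt (Ufun h) (U1 h t) t := by
  have h0 := hasDerivAt_I0 hc t
  have h1 := hasDerivAt_I1 hc t
  have h2 := hasDerivAt_I2 hc t
  have H : HasDerivAt (Ufun h)
      ((Aint h * (2 * t ^ 1)) / 2 -
        (((2 * t ^ 1) * I0 h t + t ^ 2 * h t - (2 * 1 * I1 h t + 2 * t * (t * h t)))
          + t ^ 2 * h t) / 2) t := by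
    exact ((((hasDerivAt_pow 2 t).const_mul (Aint h)).div_const 2).sub
      (((((hasDerivAt_pow 2 t).mul h0).sub
        (((hasDerivAt_id t).const_mul 2).mul h1)).add h2).div_const 2))
  convert H using 1
  simp only [U1]; ring

lemma hasDerivAt_U1 (t : ℝ) : HasDerivAt (U1 h) (U2 h t) t := by
  have h0 := hasDerivAt_I0 hc t
  have h1 := hasDerivAt_I1 hc t
  have H : HasDerivAt (U1 h)
      (Aint h * 1 - ((1 * I0 h t + t * h t) - t * h t)) t :=
    ((hasDerivAt_id t).const_mul (Aint h)).sub
      (((hasDerivAt_id t).mul h0).sub h1)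
  convert H using 1
  simp only [U2]; ring

lemma hasDerivAt_U2 (t : ℝ) : HasDerivAt (U2 h) (-(h t)) t := by
  have h0 := hasDerivAt_I0 hc t
  exact (h0.const_sub (Aint h))

lemma deriv_Ufun : deriv (Ufun h) = U1 h := funext fun t => (hasDerivAt_U hc t).deriv

lemma deriv_U1 : deriv (U1 h) = U2 h := funext fun t => (hasDerivAt_U1 hc t).deriv

lemma continuous_I0 : Continuous (I0 h) :=
  continuous_iff_continuousAt.mpr fun t => (hasDerivAt_I0 hc t).continuousAt

lemma contDiff_Ufun : ContDiff ℝ 2 (Ufun h) := by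
  rw [show (2 : WithTop ℕ∞) = 1 + 1 by norm_num, contDiff_succ_iff_deriv]
  refine ⟨fun t => (hasDerivAt_U hc t).differentiableAt, by simp, ?_⟩
  rw [deriv_Ufun hc, contDiff_one_iff_deriv]
  refine ⟨fun t => (hasDerivAt_U1 hc t).differentiableAt, ?_⟩
  rw [deriv_U1 hc]
  exact continuous_const.sub (continuous_I0 hc)

end C

section C2
variable {h : ℝ → ℝ} (hc : Continuous h)
include hc

lemma int_t1_comb (a b c t : ℝ) :
    ∫ s in t..(1:ℝ), (a + b * s + c * s ^ 2) * h s
      = a * (I0 h 1 - I0 h t) + b * (I1 h 1 - I1 h t) + c * (I2 h 1 - I2 h t) := by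
  have e0 : ∫ s in t..(1:ℝ), h s = I0 h 1 - I0 h t := by
    rw [I0, I0, ← integral_add_adjacent_intervals (hc.intervalIntegrable 0 t)
      (hc.intervalIntegrable t 1)]; ring
  have e1 : ∫ s in t..(1:ℝ), s * h s = I1 h 1 - I1 h t := by
    rw [I1, I1, ← integral_add_adjacent_intervals ((show Continuous fun s => s * h s from continuous_id'.mul hc).intervalIntegrable 0 t)
      ((show Continuous fun s => s * h s from continuous_id'.mul hc).intervalIntegrable t 1)]; ring
  have e2 : ∫ s in t..(1:ℝ), s ^ 2 * h s = I2 h 1 - I2 h t := by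
    rw [I2, I2, ← integral_add_adjacent_intervals ((show Continuous fun s => s ^ 2 * h s from (continuous_pow 2).mul hc).intervalIntegrable 0 t)
      ((show Continuous fun s => s ^ 2 * h s from (continuous_pow 2).mul hc).intervalIntegrable t 1)]; ring
  rw [integral_poly_comb hc t 1 a b c, e0, e1, e2]

lemma int_le_poly (x y a b c C : ℝ) (hxy : x ≤ y)
    (hq : ∀ s ∈ Icc x y, 0 ≤ a + b * s + c * s ^ 2)
    (hC : ∀ s ∈ Icc x y, h s ≤ C) :
    ∫ s in x..y, (a + b * s + c * s ^ 2) * h s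
      ≤ (a * y + b * y ^ 2 / 2 + c * y ^ 3 / 3) * C
        - (a * x + b * x ^ 2 / 2 + c * x ^ 3 / 3) * C := by
  rw [← integral_poly_eval x y a b c C]
  exact integral_mono_on hxy (Continuous.intervalIntegrable (by continuity) x y)
    (Continuous.intervalIntegrable (by continuity) x y)
    (fun s hs => mul_le_mul_of_nonneg_left (hC s hs) (hq s hs))

lemma int_ge_poly (x y a b c C : ℝ) (hxy : x ≤ y)
    (hq : ∀ s ∈ Icc x y, 0 ≤ a + b * s + c * s ^ 2)
    (hC : ∀ s ∈ Icc x y, C ≤ h s) :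
    (a * y + b * y ^ 2 / 2 + c * y ^ 3 / 3) * C
      - (a * x + b * x ^ 2 / 2 + c * x ^ 3 / 3) * C
      ≤ ∫ s in x..y, (a + b * s + c * s ^ 2) * h s := by
  rw [← integral_poly_eval x y a b c C]
  exact integral_mono_on hxy (Continuous.intervalIntegrable (by continuity) x y)
    (Continuous.intervalIntegrable (by continuity) x y)
    (fun s hs => mul_le_mul_of_nonneg_left (hC s hs) (hq s hs))

lemma Ufun_green (t : ℝ) :
    Ufun h t = (∫ s in (0:ℝ)..t, (0 + (t - t ^ 2 / 2) * s + (-(1/2)) * s ^ 2) * h s)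
      + ∫ s in t..(1:ℝ), (t ^ 2 / 2 + (-(t ^ 2 / 2)) * s + 0 * s ^ 2) * h s := by
  rw [integral_poly_comb hc 0 t, int_t1_comb hc]
  simp only [Ufun, Aint_eq hc, I0, I1, I2, intervalIntegral.integral_same]
  ring

lemma U1_green (t : ℝ) :
    U1 h t = (∫ s in (0:ℝ)..t, (0 + (1 - t) * s + 0 * s ^ 2) * h s)
      + ∫ s in t..(1:ℝ), (t + (-t) * s + 0 * s ^ 2) * h s := by
  rw [integral_poly_comb hc 0 t, int_t1_comb hc]
  simp only [U1, Aint_eq hc, I0, I1, I2, intervalIntegral.integral_same]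
  ring

lemma U2_green (t : ℝ) :
    U2 h t = (∫ s in t..(1:ℝ), (1 + (-1) * s + 0 * s ^ 2) * h s)
      - ∫ s in (0:ℝ)..t, (0 + 1 * s + 0 * s ^ 2) * h s := by
  rw [integral_poly_comb hc 0 t, int_t1_comb hc]
  simp only [U2, Aint_eq hc, I0, I1, I2, intervalIntegral.integral_same]
  ring

end C2

section C3
variable {h : ℝ → ℝ} (hc : Continuous h)
include hc

lemma Ufun_zero : Ufun h 0 = 0 := by
  simp [Ufun, I0, I1, I2]

omit hc in
lemma U1_zero : U1 h 0 = 0 := by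
  simp [U1, I1]

lemma U1_one : U1 h 1 = 0 := by
  simp only [U1, Aint_eq hc]; ring

lemma Ufun_mem (hlb : ∀ s ∈ Icc (0:ℝ) 1, 3 ≤ h s) (hub : ∀ s ∈ Icc (0:ℝ) 1, h s ≤ 4.1)
    {t : ℝ} (ht : t ∈ Icc (0:ℝ) 1) : Ufun h t ∈ Icc (0:ℝ) 0.3417 := by
  obtain ⟨ht0, ht1⟩ := ht
  have hsub : Icc (0:ℝ) t ⊆ Icc 0 1 := Icc_subset_Icc le_rfl ht1
  have hsub' : Icc t (1:ℝ) ⊆ Icc 0 1 := Icc_subset_Icc ht0 le_rfl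
  have hq1 : ∀ s ∈ Icc (0:ℝ) t, 0 ≤ 0 + (t - t ^ 2 / 2) * s + (-(1/2)) * s ^ 2 := by
    intro s hs
    have h2 : (0:ℝ) ≤ 2 * t - t ^ 2 - s := by
      nlinarith [mul_nonneg ht0 (sub_nonneg.2 ht1), hs.2]
    nlinarith [mul_nonneg hs.1 h2]
  have hq2 : ∀ s ∈ Icc t (1:ℝ), 0 ≤ t ^ 2 / 2 + (-(t ^ 2 / 2)) * s + 0 * s ^ 2 := by
    intro s hs
    nlinarith [sq_nonneg t, hs.2]
  have b1 := int_le_poly hc 0 t _ _ _ 4.1 ht0 hq1 (fun s hs => hub s (hsub hs))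
  have b2 := int_le_poly hc t 1 _ _ _ 4.1 ht1 hq2 (fun s hs => hub s (hsub' hs))
  have c1 := int_ge_poly hc 0 t _ _ _ 0 ht0 hq1
    (fun s hs => le_trans (by norm_num) (hlb s (hsub hs)))
  have c2 := int_ge_poly hc t 1 _ _ _ 0 ht1 hq2
    (fun s hs => le_trans (by norm_num) (hlb s (hsub' hs)))
  rw [Ufun_green hc t]
  constructor
  · nlinarith [c1, c2]
  · nlinarith [b1, b2, mul_nonneg (sq_nonneg (1 - t)) (by linarith : (0:ℝ) ≤ 2 * t + 1)]

lemma U1_mem (hlb : ∀ s ∈ Icc (0:ℝ) 1, 3 ≤ h s) (hub : ∀ s ∈ Icc (0:ℝ) 1, h s ≤ 4.1)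
    {t : ℝ} (ht : t ∈ Icc (0:ℝ) 1) : U1 h t ∈ Icc (0:ℝ) 0.5125 := by
  obtain ⟨ht0, ht1⟩ := ht
  have hsub : Icc (0:ℝ) t ⊆ Icc 0 1 := Icc_subset_Icc le_rfl ht1
  have hsub' : Icc t (1:ℝ) ⊆ Icc 0 1 := Icc_subset_Icc ht0 le_rfl
  have hq1 : ∀ s ∈ Icc (0:ℝ) t, 0 ≤ 0 + (1 - t) * s + 0 * s ^ 2 := by
    intro s hs
    nlinarith [mul_nonneg hs.1 (sub_nonneg.2 ht1)]
  have hq2 : ∀ s ∈ Icc t (1:ℝ), 0 ≤ t + (-t) * s + 0 * s ^ 2 := by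
    intro s hs
    nlinarith [mul_nonneg ht0 (sub_nonneg.2 hs.2)]
  have b1 := int_le_poly hc 0 t _ _ _ 4.1 ht0 hq1 (fun s hs => hub s (hsub hs))
  have b2 := int_le_poly hc t 1 _ _ _ 4.1 ht1 hq2 (fun s hs => hub s (hsub' hs))
  have c1 := int_ge_poly hc 0 t _ _ _ 0 ht0 hq1
    (fun s hs => le_trans (by norm_num) (hlb s (hsub hs)))
  have c2 := int_ge_poly hc t 1 _ _ _ 0 ht1 hq2
    (fun s hs => le_trans (by norm_num) (hlb s (hsub' hs)))
  rw [U1_green hc t]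
  constructor
  · nlinarith [c1, c2]
  · nlinarith [b1, b2, sq_nonneg (2 * t - 1)]

lemma U2_abs (hlb : ∀ s ∈ Icc (0:ℝ) 1, 3 ≤ h s) (hub : ∀ s ∈ Icc (0:ℝ) 1, h s ≤ 4.1)
    {t : ℝ} (ht : t ∈ Icc (0:ℝ) 1) : |U2 h t| ≤ 2.05 := by
  obtain ⟨ht0, ht1⟩ := ht
  have hsub : Icc (0:ℝ) t ⊆ Icc 0 1 := Icc_subset_Icc le_rfl ht1
  have hsub' : Icc t (1:ℝ) ⊆ Icc 0 1 := Icc_subset_Icc ht0 le_rfl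
  have hq1 : ∀ s ∈ Icc (0:ℝ) t, 0 ≤ 0 + 1 * s + 0 * s ^ 2 := by
    intro s hs; nlinarith [hs.1]
  have hq2 : ∀ s ∈ Icc t (1:ℝ), 0 ≤ 1 + (-1) * s + 0 * s ^ 2 := by
    intro s hs; nlinarith [hs.2]
  have b1 := int_le_poly hc 0 t _ _ _ 4.1 ht0 hq1 (fun s hs => hub s (hsub hs))
  have b2 := int_le_poly hc t 1 _ _ _ 4.1 ht1 hq2 (fun s hs => hub s (hsub' hs))
  have c1 := int_ge_poly hc 0 t _ _ _ 0 ht0 hq1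
    (fun s hs => le_trans (by norm_num) (hlb s (hsub hs)))
  have c2 := int_ge_poly hc t 1 _ _ _ 0 ht1 hq2
    (fun s hs => le_trans (by norm_num) (hlb s (hsub' hs)))
  rw [U2_green hc t, abs_le]
  constructor
  · nlinarith [c2, b1, sq_nonneg t, sq_nonneg (1 - t)]
  · nlinarith [b2, c1, sq_nonneg t, sq_nonneg (1 - t)]

lemma Ufun_abs_le {κ : ℝ} (hκ : 0 ≤ κ) (hb : ∀ s ∈ Icc (0:ℝ) 1, |h s| ≤ κ)
    {t : ℝ} (ht : t ∈ Icc (0:ℝ) 1) : |Ufun h t| ≤ κ / 12 := by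
  obtain ⟨ht0, ht1⟩ := ht
  have hsub : Icc (0:ℝ) t ⊆ Icc 0 1 := Icc_subset_Icc le_rfl ht1
  have hsub' : Icc t (1:ℝ) ⊆ Icc 0 1 := Icc_subset_Icc ht0 le_rfl
  have hq1 : ∀ s ∈ Icc (0:ℝ) t, 0 ≤ 0 + (t - t ^ 2 / 2) * s + (-(1/2)) * s ^ 2 := by
    intro s hs
    have h2 : (0:ℝ) ≤ 2 * t - t ^ 2 - s := by
      nlinarith [mul_nonneg ht0 (sub_nonneg.2 ht1), hs.2]
    nlinarith [mul_nonneg hs.1 h2]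
  have hq2 : ∀ s ∈ Icc t (1:ℝ), 0 ≤ t ^ 2 / 2 + (-(t ^ 2 / 2)) * s + 0 * s ^ 2 := by
    intro s hs
    nlinarith [sq_nonneg t, hs.2]
  have b1 := int_le_poly hc 0 t _ _ _ κ ht0 hq1
    (fun s hs => le_trans (le_abs_self _) (hb s (hsub hs)))
  have b2 := int_le_poly hc t 1 _ _ _ κ ht1 hq2
    (fun s hs => le_trans (le_abs_self _) (hb s (hsub' hs)))
  have c1 := int_ge_poly hc 0 t _ _ _ (-κ) ht0 hq1
    (fun s hs => le_trans (neg_le_of_abs_le (hb s (hsub hs))) le_rfl)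
  have c2 := int_ge_poly hc t 1 _ _ _ (-κ) ht1 hq2
    (fun s hs => le_trans (neg_le_of_abs_le (hb s (hsub' hs))) le_rfl)
  rw [Ufun_green hc t, abs_le]
  have key : (0:ℝ) ≤ κ * ((1 - t) ^ 2 * (2 * t + 1)) :=
    mul_nonneg hκ (mul_nonneg (sq_nonneg _) (by linarith))
  constructor
  · nlinarith [c1, c2, key]
  · nlinarith [b1, b2, key]

end C3

-- Linearity of the Green operator
section D

lemma Ufun_sub {h₁ h₂ : ℝ → ℝ} (hc1 : Continuous h₁) (hc2 : Continuous h₂) (t : ℝ) :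
    Ufun (fun s => h₁ s - h₂ s) t = Ufun h₁ t - Ufun h₂ t := by
  have eA : Aint (fun s => h₁ s - h₂ s) = Aint h₁ - Aint h₂ := by
    rw [Aint, Aint, Aint, ← integral_sub ((show Continuous fun s => (1 - s) * h₁ s from (continuous_const.sub continuous_id').mul hc1)
        |>.intervalIntegrable 0 1) ((show Continuous fun s => (1 - s) * h₂ s from (continuous_const.sub continuous_id').mul hc2)
        |>.intervalIntegrable 0 1)]
    exact integral_congr fun s _ => by ring
  have e0 : I0 (fun s => h₁ s - h₂ s) t = I0 h₁ t - I0 h₂ t := by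
    rw [I0, I0, I0, ← integral_sub (hc1.intervalIntegrable 0 t) (hc2.intervalIntegrable 0 t)]
  have e1 : I1 (fun s => h₁ s - h₂ s) t = I1 h₁ t - I1 h₂ t := by
    rw [I1, I1, I1, ← integral_sub ((show Continuous fun s => s * h₁ s from continuous_id'.mul hc1).intervalIntegrable 0 t)
      ((show Continuous fun s => s * h₂ s from continuous_id'.mul hc2).intervalIntegrable 0 t)]
    exact integral_congr fun s _ => by ring
  have e2 : I2 (fun s => h₁ s - h₂ s) t = I2 h₁ t - I2 h₂ t := by
    rw [I2, I2, I2, ← integral_sub ((show Continuous fun s => s ^ 2 * h₁ s from (continuous_pow 2).mul hc1).intervalIntegrable 0 t)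
      ((show Continuous fun s => s ^ 2 * h₂ s from (continuous_pow 2).mul hc2).intervalIntegrable 0 t)]
    exact integral_congr fun s _ => by ring
  simp only [Ufun, eA, e0, e1, e2]
  ring

end D

section D2

noncomputable def hfun (u : C(Icc (0:ℝ) 1, ℝ)) : ℝ → ℝ :=
  fun s => gfun (clip (u (projIcc 0 1 zero_le_one s)))

lemma hfun_cont (u : C(Icc (0:ℝ) 1, ℝ)) : Continuous (hfun u) :=
  gfun_cont.comp (clip_cont.comp (u.continuous.comp continuous_projIcc))

lemma hfun_lb (u : C(Icc (0:ℝ) 1, ℝ)) (s : ℝ) : 3 ≤ hfun u s := gfun_lb (clip_mem _)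

lemma hfun_ub (u : C(Icc (0:ℝ) 1, ℝ)) (s : ℝ) : hfun u s ≤ 4.1 := gfun_ub (clip_mem _)

noncomputable def Tmap (u : C(Icc (0:ℝ) 1, ℝ)) : C(Icc (0:ℝ) 1, ℝ) :=
  ⟨fun t => Ufun (hfun u) t.1,
    ((contDiff_Ufun (hfun_cont u)).continuous.comp continuous_subtype_val)⟩

lemma Tmap_dist (u v : C(Icc (0:ℝ) 1, ℝ)) :
    dist (Tmap u) (Tmap v) ≤ (5/12) * dist u v := by
  rw [ContinuousMap.dist_le (by positivity)]
  intro t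
  have hd : ∀ s ∈ Icc (0:ℝ) 1, |hfun u s - hfun v s| ≤ 5 * dist u v := by
    intro s _
    set x := u (projIcc 0 1 zero_le_one s)
    set y := v (projIcc 0 1 zero_le_one s)
    have h1 : |gfun (clip x) - gfun (clip y)| ≤ 5 * |clip x - clip y| :=
      gfun_lip (clip_mem _) (clip_mem _)
    have h2 : |clip x - clip y| ≤ |x - y| := clip_lip x y
    have h3 : |x - y| ≤ dist u v := by
      have := ContinuousMap.dist_apply_le_dist (f := u) (g := v) (projIcc 0 1 zero_le_one s)
      rwa [Real.dist_eq] at this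
    calc |hfun u s - hfun v s| = |gfun (clip x) - gfun (clip y)| := rfl
      _ ≤ 5 * |clip x - clip y| := h1
      _ ≤ 5 * dist u v := by linarith
  have key := Ufun_abs_le (show Continuous fun s => hfun u s - hfun v s from (hfun_cont u).sub (hfun_cont v))
    (κ := 5 * dist u v) (by positivity) hd t.2
  rw [Ufun_sub (hfun_cont u) (hfun_cont v)] at key
  have : dist (Tmap u t) (Tmap v t) = |Ufun (hfun u) t.1 - Ufun (hfun v) t.1| := by
    rw [Real.dist_eq]; rfl
  rw [this]
  linarith

lemma Tmap_contracting : ContractingWith (⟨5/12, by norm_num⟩ : NNReal) Tmap := by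
  constructor
  · exact NNReal.coe_lt_coe.mp (show (5/12:ℝ) < 1 by norm_num)
  · apply LipschitzWith.of_dist_le_mul
    intro u v
    exact_mod_cast Tmap_dist u v

noncomputable def ufix : C(Icc (0:ℝ) 1, ℝ) :=
  ContractingWith.fixedPoint Tmap Tmap_contracting

lemma ufix_eq : ∀ x : Icc (0:ℝ) 1, ufix x = Ufun (hfun ufix) x.1 := by
  intro x
  have h := ContractingWith.fixedPoint_isFixedPt Tmap_contracting
  conv_lhs => rw [show ufix = Tmap ufix from h.symm]
  rfl

noncomputable def hstar : ℝ → ℝ := hfun ufix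

noncomputable def usol : ℝ → ℝ := Ufun hstar

lemma hstar_cont : Continuous hstar := hfun_cont ufix
lemma hstar_lb : ∀ s ∈ Icc (0:ℝ) 1, 3 ≤ hstar s := fun s _ => hfun_lb ufix s
lemma hstar_ub : ∀ s ∈ Icc (0:ℝ) 1, hstar s ≤ 4.1 := fun s _ => hfun_ub ufix s

lemma usol_mem {t : ℝ} (ht : t ∈ Icc (0:ℝ) 1) : usol t ∈ Icc (0:ℝ) 0.3417 :=
  Ufun_mem hstar_cont hstar_lb hstar_ub ht

lemma hstar_eq {t : ℝ} (ht : t ∈ Icc (0:ℝ) 1) : hstar t = gfun (usol t) := by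
  have h1 : projIcc (0:ℝ) 1 zero_le_one t = ⟨t, ht⟩ := projIcc_of_mem zero_le_one ht
  have h2 : ufix ⟨t, ht⟩ = usol t := ufix_eq ⟨t, ht⟩
  rw [hstar, hfun, h1, h2, clip_eq_self (usol_mem ht)]

end D2

section Sol

lemma deriv_usol : deriv usol = U1 hstar := deriv_Ufun hstar_cont

lemma deriv2_usol : deriv (deriv usol) = U2 hstar := by
  rw [usol, deriv_Ufun hstar_cont, deriv_U1 hstar_cont]

lemma usol_ode {t : ℝ} (ht : t ∈ Ioo (0:ℝ) 1) :
    HasDerivAt (deriv (deriv usol))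
      (-((5 * usol t ^ 3 + 4 * usol t + 3) / (usol t ^ 2 + 1))) t := by
  rw [deriv2_usol]
  have h1 := hasDerivAt_U2 hstar_cont t
  have h2 : hstar t = (5 * usol t ^ 3 + 4 * usol t + 3) / (usol t ^ 2 + 1) := by
    rw [hstar_eq (Ioo_subset_Icc_self ht)]; rfl
  rwa [h2] at h1

lemma usol_deriv_mem {t : ℝ} (ht : t ∈ Icc (0:ℝ) 1) : deriv usol t ∈ Icc (0:ℝ) 0.5125 := by
  rw [deriv_usol]; exact U1_mem hstar_cont hstar_lb hstar_ub ht

lemma usol_deriv2_abs {t : ℝ} (ht : t ∈ Icc (0:ℝ) 1) : |deriv (deriv usol) t| ≤ 2.05 := by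
  rw [deriv2_usol]; exact U2_abs hstar_cont hstar_lb hstar_ub ht

lemma usol_monotone : MonotoneOn usol (Icc (0:ℝ) 1) := by
  apply monotoneOn_of_deriv_nonneg (convex_Icc 0 1)
    (contDiff_Ufun hstar_cont).continuous.continuousOn
    ((contDiff_Ufun hstar_cont).differentiable (by norm_num)).differentiableOn
  intro x hx
  rw [interior_Icc] at hx
  have := usol_deriv_mem (Ioo_subset_Icc_self hx)
  exact this.1

lemma usol_isSolution : ContDiff ℝ 2 usol ∧
    (∀ t ∈ Ioo (0:ℝ) 1, HasDerivAt (deriv (deriv usol))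
      (-((5 * usol t ^ 3 + 4 * usol t + 3) / (usol t ^ 2 + 1))) t) ∧
    usol 0 = 0 ∧ deriv usol 0 = 0 ∧ deriv usol 1 = 0 := by
  refine ⟨contDiff_Ufun hstar_cont, fun t ht => usol_ode ht, Ufun_zero hstar_cont, ?_, ?_⟩
  · rw [deriv_usol]; exact U1_zero
  · rw [deriv_usol]; exact U1_one hstar_cont

end Sol

section Uniq

lemma le_quadratic {p g : ℝ → ℝ} {K : ℝ}
    (hpd : Differentiable ℝ p)
    (hg : ∀ t ∈ Ioo (0:ℝ) 1, HasDerivAt (deriv p) (g t) t)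
    (hgK : ∀ t ∈ Ioo (0:ℝ) 1, -K ≤ g t)
    (h0 : p 0 = 0) (h1 : p 1 = 0) :
    ∀ t ∈ Icc (0:ℝ) 1, p t ≤ K * (t * (1 - t)) / 2 := by
  have hφ : ∀ t : ℝ, HasDerivAt (fun s : ℝ => K * (s * (1 - s)) / 2) (K * (1 - 2 * t) / 2) t := by
    intro t
    have h := (((hasDerivAt_id t).mul ((hasDerivAt_id t).const_sub 1)).const_mul K).div_const 2
    refine h.congr_deriv ?_
    simp only [id_eq]
    ring
  set r : ℝ → ℝ := fun t => p t - K * (t * (1 - t)) / 2 with hr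
  have hrd : Differentiable ℝ r := hpd.sub fun t => (hφ t).differentiableAt
  have hderiv_r : deriv r = fun t => deriv p t - K * (1 - 2 * t) / 2 := by
    funext t
    rw [hr]
    rw [deriv_fun_sub (hpd t) (hφ t).differentiableAt, (hφ t).deriv]
  have hψ : ∀ x : ℝ, HasDerivAt (fun t : ℝ => K * (1 - 2 * t) / 2) (-K) x := by
    intro x
    have h := ((((hasDerivAt_id x).const_mul 2).const_sub 1).const_mul K).div_const 2
    refine h.congr_deriv ?_
    ring
  have hconv : ConvexOn ℝ (Icc (0:ℝ) 1) r := by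
    apply convexOn_of_deriv2_nonneg (convex_Icc 0 1) hrd.continuous.continuousOn
      hrd.differentiableOn
    · rw [hderiv_r, interior_Icc]
      intro x hx
      exact ((hg x hx).sub (hψ x)).differentiableAt.differentiableWithinAt
    · intro x hx
      rw [interior_Icc] at hx
      have hD : HasDerivAt (deriv r) (g x - -K) x := by
        rw [hderiv_r]
        exact (hg x hx).sub (hψ x)
      have : deriv^[2] r x = deriv (deriv r) x := by
        simp [Function.iterate_succ, Function.comp]
      rw [this, hD.deriv]
      linarith [hgK x hx]
  intro t ht
  have hc := hconv.2 (left_mem_Icc.2 zero_le_one) (right_mem_Icc.2 zero_le_one)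
    (by linarith [ht.2] : (0:ℝ) ≤ 1 - t) ht.1 (by ring)
  have e1 : (1 - t) • (0:ℝ) + t • (1:ℝ) = t := by simp
  rw [e1] at hc
  have e2 : r 0 = 0 := by simp [hr, h0]
  have e3 : r 1 = 0 := by simp [hr, h1]
  rw [e2, e3] at hc
  simp only [smul_eq_mul, mul_zero, add_zero] at hc
  have : r t ≤ 0 := by linarith
  simp only [hr] at this
  linarith

lemma abs_le_quadratic {p g : ℝ → ℝ} {K : ℝ}
    (hpd : Differentiable ℝ p)
    (hg : ∀ t ∈ Ioo (0:ℝ) 1, HasDerivAt (deriv p) (g t) t)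
    (hgK : ∀ t ∈ Ioo (0:ℝ) 1, |g t| ≤ K)
    (h0 : p 0 = 0) (h1 : p 1 = 0) :
    ∀ t ∈ Icc (0:ℝ) 1, |p t| ≤ K * (t * (1 - t)) / 2 := by
  intro t ht
  have up := le_quadratic hpd hg (fun x hx => neg_le_of_abs_le (hgK x hx)) h0 h1 t ht
  have hgneg : ∀ x ∈ Ioo (0:ℝ) 1, HasDerivAt (deriv fun s => -p s) (-g x) x := by
    intro x hx
    have e : (deriv fun s => -p s) = fun s => -(deriv p s) := funext fun s => deriv.neg
    rw [e]
    exact (hg x hx).neg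
  have lo := le_quadratic (K := K) (show Differentiable ℝ fun s => -p s from hpd.neg) hgneg
    (fun x hx => by have := le_of_abs_le (hgK x hx); linarith) (by simp [h0]) (by simp [h1]) t ht
  rw [abs_le]
  constructor <;> linarith

lemma unpack2 {v : ℝ → ℝ} (hv : ContDiff ℝ 2 v) :
    Differentiable ℝ v ∧ Differentiable ℝ (deriv v) ∧ Continuous (deriv v)
      ∧ Continuous (deriv (deriv v)) := by
  rw [show (2 : WithTop ℕ∞) = 1 + 1 by norm_num, contDiff_succ_iff_deriv] at hv
  obtain ⟨h1, -, h2⟩ := hv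
  rw [contDiff_one_iff_deriv] at h2
  exact ⟨h1, h2.1, h2.1.continuous, h2.2⟩

end Uniq

lemma unique_aux {v u : ℝ → ℝ}
    (hv2 : ContDiff ℝ 2 v) (hu2 : ContDiff ℝ 2 u)
    (hvode : ∀ t ∈ Ioo (0:ℝ) 1,
      HasDerivAt (deriv (deriv v)) (-((5 * v t ^ 3 + 4 * v t + 3) / (v t ^ 2 + 1))) t)
    (huode : ∀ t ∈ Ioo (0:ℝ) 1,
      HasDerivAt (deriv (deriv u)) (-((5 * u t ^ 3 + 4 * u t + 3) / (u t ^ 2 + 1))) t)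
    (hv0 : v 0 = 0) (hu0 : u 0 = 0)
    (hv'0 : deriv v 0 = 0) (hu'0 : deriv u 0 = 0)
    (hv'1 : deriv v 1 = 0) (hu'1 : deriv u 1 = 0)
    (hvm : ∀ t ∈ Icc (0:ℝ) 1, v t ∈ Icc (0:ℝ) 0.3417)
    (hum : ∀ t ∈ Icc (0:ℝ) 1, u t ∈ Icc (0:ℝ) 0.3417) :
    ∀ t ∈ Icc (0:ℝ) 1, v t = u t := by
  obtain ⟨hvd, hvd', hv'c, hv''c⟩ := unpack2 hv2
  obtain ⟨hud, hud', hu'c, hu''c⟩ := unpack2 hu2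
  set w : ℝ → ℝ := fun t => v t - u t with hw
  have hwc : Continuous w := hvd.continuous.sub hud.continuous
  obtain ⟨ts, hts, hmax⟩ := isCompact_Icc.exists_isMaxOn (s := Icc (0:ℝ) 1)
    ⟨0, left_mem_Icc.2 zero_le_one⟩ ((hwc.abs).continuousOn)
  set m := |w ts| with hm
  have hm0 : 0 ≤ m := abs_nonneg _
  have hmax' : ∀ x ∈ Icc (0:ℝ) 1, |w x| ≤ m := fun x hx => (isMaxOn_iff.mp hmax) x hx
  set p : ℝ → ℝ := fun t => deriv v t - deriv u t with hp
  have hpd : Differentiable ℝ p := hvd'.sub hud'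
  have hpc : Continuous p := hv'c.sub hu'c
  have hderiv_p : deriv p = fun t => deriv (deriv v) t - deriv (deriv u) t :=
    funext fun t => deriv_sub (hvd' t) (hud' t)
  set g : ℝ → ℝ := fun t => (-((5 * v t ^ 3 + 4 * v t + 3) / (v t ^ 2 + 1)))
    - (-((5 * u t ^ 3 + 4 * u t + 3) / (u t ^ 2 + 1))) with hgdef
  have hg : ∀ t ∈ Ioo (0:ℝ) 1, HasDerivAt (deriv p) (g t) t := by
    intro t ht
    rw [hderiv_p]
    exact (hvode t ht).sub (huode t ht)
  have hgK : ∀ t ∈ Ioo (0:ℝ) 1, |g t| ≤ 5 * m := by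
    intro t ht
    have h1 : g t = gfun (u t) - gfun (v t) := by
      simp only [hgdef, gfun]; ring
    rw [h1]
    have hlip := gfun_lip (hum t (Ioo_subset_Icc_self ht)) (hvm t (Ioo_subset_Icc_self ht))
    have h2 : |u t - v t| = |w t| := by rw [hw, abs_sub_comm]
    calc |gfun (u t) - gfun (v t)| ≤ 5 * |u t - v t| := hlip
      _ = 5 * |w t| := by rw [h2]
      _ ≤ 5 * m := by linarith [hmax' t (Ioo_subset_Icc_self ht)]
  have hp0 : p 0 = 0 := by simp [hp, hv'0, hu'0]
  have hp1 : p 1 = 0 := by simp [hp, hv'1, hu'1]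
  have habs := abs_le_quadratic (K := 5 * m) hpd hg hgK hp0 hp1
  have hwint : ∀ t ∈ Icc (0:ℝ) 1, w t = ∫ s in (0:ℝ)..t, p s := by
    intro t ht
    have hFTC := integral_eq_sub_of_hasDerivAt (f := w) (f' := p)
      (fun s _ => ((hvd s).hasDerivAt.sub (hud s).hasDerivAt)) (hpc.intervalIntegrable 0 t)
    rw [hFTC]
    simp [hw, hv0, hu0]
  have hwb : ∀ t ∈ Icc (0:ℝ) 1, |w t| ≤ 5 * m / 12 := by
    intro t ht
    rw [hwint t ht]
    have hple : ∀ s ∈ Icc (0:ℝ) t, p s ≤ (0 + (5*m/2) * s + (-(5*m/2)) * s ^ 2) * 1 := by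
      intro s hs
      have hs1 : s ∈ Icc (0:ℝ) 1 := ⟨hs.1, le_trans hs.2 ht.2⟩
      have h3 := abs_le.mp (habs s hs1)
      nlinarith [h3.2]
    have hpge : ∀ s ∈ Icc (0:ℝ) t, (0 + (-(5*m/2)) * s + (5*m/2) * s ^ 2) * 1 ≤ p s := by
      intro s hs
      have hs1 : s ∈ Icc (0:ℝ) 1 := ⟨hs.1, le_trans hs.2 ht.2⟩
      have h3 := abs_le.mp (habs s hs1)
      nlinarith [h3.1]
    have cpoly : ∀ b c : ℝ, Continuous fun s : ℝ => (0 + b * s + c * s ^ 2) * 1 := by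
      intro b c
      fun_prop
    have hup := integral_mono_on (μ := volume) ht.1 (hpc.intervalIntegrable 0 t)
      ((cpoly (5*m/2) (-(5*m/2))).intervalIntegrable 0 t) hple
    have hlo := integral_mono_on (μ := volume) ht.1 ((cpoly (-(5*m/2)) (5*m/2)).intervalIntegrable 0 t)
      (hpc.intervalIntegrable 0 t) hpge
    rw [integral_poly_eval 0 t _ _ _ 1] at hup hlo
    have key : (0:ℝ) ≤ m * ((1 - t) ^ 2 * (2 * t + 1)) :=
      mul_nonneg hm0 (mul_nonneg (sq_nonneg _) (by linarith [ht.1]))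
    rw [abs_le]
    constructor
    · nlinarith [hlo, key]
    · nlinarith [hup, key]
  have hmle : m ≤ 5 * m / 12 := by simpa [hm] using hwb ts hts
  have hm_zero : m = 0 := by linarith
  intro t ht
  have h4 : |w t| ≤ 0 := by
    have := hmax' t ht
    linarith [hm_zero ▸ this]
  have h5 : w t = 0 := abs_nonpos_iff.mp h4
  have : v t - u t = 0 := h5
  linarith


end Aux

theorem example_8 :
    ∃ u : ℝ → ℝ, (IsSolution u ∧ InBounds u ∧
      (∀ t ∈ Set.Icc (0:ℝ) 1, 0 ≤ u t) ∧ MonotoneOn u (Set.Icc (0:ℝ) 1)) ∧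
      ∀ v : ℝ → ℝ, IsSolution v ∧ InBounds v → ∀ t ∈ Set.Icc (0:ℝ) 1, v t = u t := by
  have husol := usol_isSolution
  refine ⟨usol, ⟨husol, fun t ht => ⟨usol_mem ht, usol_deriv_mem ht, usol_deriv2_abs ht⟩,
    fun t ht => (usol_mem ht).1, usol_monotone⟩, ?_⟩
  rintro v ⟨⟨hv2, hvode, hv0, hv'0, hv'1⟩, hvb⟩
  exact unique_aux hv2 husol.1 hvode husol.2.1 hv0 husol.2.2.1 hv'0 husol.2.2.2.1
    hv'1 husol.2.2.2.2 (fun t ht => (hvb t ht).1) (fun t ht => usol_mem ht)
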